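/- Let E be a finite-dimensional real inner product space, let f : E → ℝ, and let x ∈ E with x ≠ 0. Write x̂ = ‖x‖⁻¹ • x and suppose f is differentiable at x̂. Define g : E → ℝ by g(ξ) = ‖ξ‖ · f(‖ξ‖⁻¹ • ξ). Then g is differentiable at x and gradient g x = gradient f x̂ + (f x̂ − ⟪gradient f x̂, x̂⟫) • x̂. -/

import Mathlib

open RealInnerProductSpace

section Aux

open InnerProductSpace

variable {E' : Type*} [NormedAddCommGroup E'] [InnerProductSpace ℝ E']

private theorem aux_hasFDerivAt_norm (x : E') (hx : x ≠ 0) :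
    HasFDerivAt (fun ξ : E' => ‖ξ‖) (‖x‖⁻¹ • innerSL ℝ x) x := by
  have h1 : HasFDerivAt (fun ξ : E' => ‖ξ‖ ^ 2) (2 • (innerSL ℝ x)) x :=
    (hasStrictFDerivAt_norm_sq x).hasFDerivAt
  have hr : ‖x‖ ≠ 0 := norm_ne_zero_iff.mpr hx
  have h2 := h1.sqrt (by positivity)
  have heq : (fun ξ : E' => Real.sqrt (‖ξ‖ ^ 2)) = fun ξ : E' => ‖ξ‖ := by
    funext ξ; rw [Real.sqrt_sq (norm_nonneg ξ)]
  rw [heq] at h2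
  convert h2 using 1
  ext v
  simp only [ContinuousLinearMap.coe_smul', Pi.smul_apply, smul_eq_mul,
    ContinuousLinearMap.smul_apply, Real.sqrt_sq (norm_nonneg x),
    two_smul, ContinuousLinearMap.add_apply]
  field_simp
  ring

end Aux

/-- For a function `f` differentiable at `x̂ = ‖x‖⁻¹ • x`, the positively 1-homogeneous
extension `g ξ = ‖ξ‖ * f (‖ξ‖⁻¹ • ξ)` is differentiable at `x ≠ 0` and its gradient is
`∇f(x̂) + (f(x̂) − ⟪∇f(x̂), x̂⟫) • x̂`. -/
theorem gradient_homogeneous_extension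
    {E : Type*} [NormedAddCommGroup E] [InnerProductSpace ℝ E] [FiniteDimensional ℝ E]
    (f : E → ℝ) (x : E) (hx : x ≠ 0)
    (hf : DifferentiableAt ℝ f (‖x‖⁻¹ • x)) :
    DifferentiableAt ℝ (fun ξ : E => ‖ξ‖ * f (‖ξ‖⁻¹ • ξ)) x ∧
      gradient (fun ξ : E => ‖ξ‖ * f (‖ξ‖⁻¹ • ξ)) x =
        gradient f (‖x‖⁻¹ • x) +
          (f (‖x‖⁻¹ • x) - ⟪gradient f (‖x‖⁻¹ • x), ‖x‖⁻¹ • x⟫) • (‖x‖⁻¹ • x) := by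
  open InnerProductSpace in
  have hr : ‖x‖ ≠ 0 := norm_ne_zero_iff.mpr hx
  set a := gradient f (‖x‖⁻¹ • x) with ha
  have hN := aux_hasFDerivAt_norm x hx
  -- derivative of ξ ↦ ‖ξ‖⁻¹
  have hInv : HasFDerivAt (fun ξ : E => ‖ξ‖⁻¹)
      ((-(‖x‖ ^ 2)⁻¹) • (‖x‖⁻¹ • innerSL ℝ x)) x :=
    (hasDerivAt_inv hr).comp_hasFDerivAt x hN
  -- derivative of ξ ↦ ‖ξ‖⁻¹ • ξ
  have hU := hInv.smul (hasFDerivAt_id x)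
  -- derivative of f at x̂
  have hfd : HasFDerivAt f (InnerProductSpace.toDual ℝ E a) (‖x‖⁻¹ • x) :=
    (hf.hasGradientAt).hasFDerivAt
  simp only [id_eq] at hU
  have hcomp := HasFDerivAt.comp (f := fun ξ : E => ‖ξ‖⁻¹ • ξ) x hfd hU
  have hmul := hN.mul hcomp
  have key : HasGradientAt (fun ξ : E => ‖ξ‖ * f (‖ξ‖⁻¹ • ξ))
      (a + (f (‖x‖⁻¹ • x) - ⟪a, ‖x‖⁻¹ • x⟫) • (‖x‖⁻¹ • x)) x := by
    rw [hasGradientAt_iff_hasFDerivAt]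
    convert hmul using 1
    · rfl
    · rfl
    ext v
    simp only [InnerProductSpace.toDual_apply_apply, ContinuousLinearMap.add_apply,
      ContinuousLinearMap.smul_apply,
      ContinuousLinearMap.coe_comp', Function.comp_apply, ContinuousLinearMap.smulRight_apply,
      ContinuousLinearMap.coe_id', id_eq, innerSL_apply_apply,
      inner_add_left, real_inner_smul_left, inner_smul_right, inner_add_right,
      inner_smul_left, RCLike.star_def, starRingEnd_apply, star_trivial, smul_eq_mul,
      inner_neg_right, neg_mul, mul_neg, neg_neg]
    have hxx : ⟪x, x⟫ = ‖x‖ ^ 2 := real_inner_self_eq_norm_sq x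
    field_simp
    ring_nf
  exact ⟨key.differentiableAt, key.gradient⟩
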